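/- For any orientation O of the graph and any O-oriented algorithm for Pandora's Matching Problem, the expected welfare is at most E[Σ_{(i,j) ∈ O} A_{ij} κ_{ij}^(1)], where κ_{ij}^(1) is the capped value of the two-stage nested basket for oriented edge (i,j), and A_{ij} the indicator edge {i,j} is matched. -/

import Mathlib

open MeasureTheory Filter

/-- Amortization bound for `O`-oriented algorithms in Pandora's Matching Problem:
each oriented edge `e = (i,j) ∈ O` is a two-stage nested basket (first box costs
`c1 e`, revealing `v1 e`; second box costs `c2 e`, revealing the total value
`v1 e + v2 e`), with nested Weitzman indices `σ1 e` (deterministic) and `σ2 e`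
(measurable in the first-stage information `m2 e`) and capped value
`κ e = min (σ1 e) (min (σ2 e) (v1 e + v2 e))`. For any `O`-oriented algorithm —
0/1 indicators `A e ≤ I2 e ≤ I1 e` with `I1 e` independent of the basket's
contents, `I2 e` measurable in `m2 e`, and the claimed edges forming a matching —
the expected welfare is at most `E[∑_{e ∈ O} A e · κ e]`. -/
theorem oriented_welfare_bound
    {Ω : Type*} [m0 : MeasurableSpace Ω] (μ : Measure Ω) [IsProbabilityMeasure μ]
    {V : Type*} [DecidableEq V] (O : Finset (V × V))
    (v1 v2 : V × V → Ω → ℝ) (c1 c2 : V × V → ℝ)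
    (σ1 : V × V → ℝ) (σ2 : V × V → Ω → ℝ) (κ : V × V → Ω → ℝ)
    (m2 : V × V → MeasurableSpace Ω) (hm2 : ∀ e, m2 e ≤ m0)
    (A I1 I2 : V × V → Ω → ℝ)
    (hAmeas : ∀ e, Measurable (A e)) (hI1meas : ∀ e, Measurable (I1 e))
    (hA01 : ∀ e ω, A e ω = 0 ∨ A e ω = 1)
    (hI101 : ∀ e ω, I1 e ω = 0 ∨ I1 e ω = 1)
    (hI201 : ∀ e ω, I2 e ω = 0 ∨ I2 e ω = 1)
    (hchain : ∀ e ω, A e ω ≤ I2 e ω ∧ I2 e ω ≤ I1 e ω)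
    (hmatch : ∀ ω, ∀ e ∈ O, ∀ e' ∈ O, e ≠ e' → A e ω = 1 → A e' ω = 1 →
      e.1 ≠ e'.1 ∧ e.1 ≠ e'.2 ∧ e.2 ≠ e'.1 ∧ e.2 ≠ e'.2)
    (hκ : ∀ e ω, κ e ω = min (σ1 e) (min (σ2 e ω) (v1 e ω + v2 e ω)))
    (hσ1 : ∀ e ∈ O, ∫ ω, max (min (σ2 e ω) (v1 e ω + v2 e ω) - σ1 e) 0 ∂μ = c1 e)
    (hσ2meas : ∀ e, Measurable[m2 e] (σ2 e))
    (hσ2 : ∀ e ∈ O, (μ[(fun ω => max (v1 e ω + v2 e ω - σ2 e ω) 0) | m2 e])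
        =ᵐ[μ] fun _ => c2 e)
    (hI1indep : ∀ e ∈ O, ProbabilityTheory.IndepFun (I1 e)
        (fun ω => min (σ2 e ω) (v1 e ω + v2 e ω)) μ)
    (hI2meas : ∀ e ∈ O, Measurable[m2 e] (I2 e))
    (hvint : ∀ e ∈ O, Integrable (fun ω => v1 e ω + v2 e ω) μ)
    (hκint : ∀ e ∈ O, Integrable (κ e) μ)
    (hσ2int : ∀ e ∈ O, Integrable (σ2 e) μ) :
    ∫ ω, (∑ e ∈ O, (A e ω * (v1 e ω + v2 e ω) - I1 e ω * c1 e - I2 e ω * c2 e)) ∂μ ≤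
      ∫ ω, (∑ e ∈ O, A e ω * κ e ω) ∂μ := by
    classical
  -- per-edge integrability and bound
  have hmono : ∀ e ∈ O,
      ∫ ω, (A e ω * (v1 e ω + v2 e ω) - I1 e ω * c1 e - I2 e ω * c2 e) ∂μ ≤
        ∫ ω, A e ω * κ e ω ∂μ := by
    intro e he
    set S : Ω → ℝ := fun ω => v1 e ω + v2 e ω with hSdef
    set K : Ω → ℝ := fun ω => min (σ2 e ω) (S ω) with hKdef
    set f2 : Ω → ℝ := fun ω => max (S ω - σ2 e ω) 0 with hf2def
    set f1 : Ω → ℝ := fun ω => max (K ω - σ1 e) 0 with hf1def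
    have hSint : Integrable S μ := hvint e he
    have hσ2m : Measurable (σ2 e) := (hσ2meas e).mono (hm2 e) le_rfl
    have hσ2i : Integrable (σ2 e) μ := hσ2int e he
    have hKeq : K = fun ω => σ2 e ω - max (σ2 e ω - S ω) 0 := by
      funext ω
      rcases le_total (σ2 e ω) (S ω) with h | h <;>
        simp [hKdef, min_eq_left, min_eq_right, h, max_eq_left, max_eq_right, sub_nonpos.2 h] <;>
        linarith
    have hKint : Integrable K μ := by
      rw [hKeq]; exact hσ2i.sub (hσ2i.sub hSint).pos_part
    have hf2int : Integrable f2 μ := (hSint.sub hσ2i).pos_part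
    have hf1int : Integrable f1 μ := (hKint.sub (integrable_const _)).pos_part
    have hI2m : Measurable (I2 e) := (hI2meas e he).mono (hm2 e) le_rfl
    have hI2bd : ∀ ω, ‖I2 e ω‖ ≤ 1 := by
      intro ω; rcases hI201 e ω with h | h <;> simp [h]
    have hI1bd : ∀ ω, ‖I1 e ω‖ ≤ 1 := by
      intro ω; rcases hI101 e ω with h | h <;> simp [h]
    have hAbd : ∀ ω, ‖A e ω‖ ≤ 1 := by
      intro ω; rcases hA01 e ω with h | h <;> simp [h]
    have hASint : Integrable (fun ω => A e ω * S ω) μ :=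
      hSint.bdd_mul (hAmeas e).aestronglyMeasurable (ae_of_all _ hAbd)
    have hAκint : Integrable (fun ω => A e ω * κ e ω) μ :=
      (hκint e he).bdd_mul (hAmeas e).aestronglyMeasurable (ae_of_all _ hAbd)
    have hI1f1int : Integrable (fun ω => I1 e ω * f1 ω) μ :=
      hf1int.bdd_mul (hI1meas e).aestronglyMeasurable (ae_of_all _ hI1bd)
    have hI2f2int : Integrable (fun ω => I2 e ω * f2 ω) μ :=
      hf2int.bdd_mul hI2m.aestronglyMeasurable (ae_of_all _ hI2bd)
    have hI1c1int : Integrable (fun ω => I1 e ω * c1 e) μ :=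
      (integrable_const (c1 e)).bdd_mul (hI1meas e).aestronglyMeasurable (ae_of_all _ hI1bd)
    have hI2c2int : Integrable (fun ω => I2 e ω * c2 e) μ :=
      (integrable_const (c2 e)).bdd_mul hI2m.aestronglyMeasurable (ae_of_all _ hI2bd)
    -- Step 2: ∫ I2 * c2 = ∫ I2 * f2
    have step2 : ∫ ω, I2 e ω * c2 e ∂μ = ∫ ω, I2 e ω * f2 ω ∂μ := by
      have hmul : μ[(I2 e) * f2 | m2 e] =ᵐ[μ] (I2 e) * μ[f2 | m2 e] :=
        condExp_mul_of_stronglyMeasurable_left ((hI2meas e he).stronglyMeasurable) hI2f2int hf2int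
      have h1 : ∫ ω, I2 e ω * f2 ω ∂μ = ∫ ω, (μ[(I2 e) * f2 | m2 e]) ω ∂μ :=
        (integral_condExp (hm2 e)).symm
      have h2 : ∫ ω, (μ[(I2 e) * f2 | m2 e]) ω ∂μ = ∫ ω, I2 e ω * c2 e ∂μ := by
        refine integral_congr_ae (hmul.trans ?_)
        filter_upwards [hσ2 e he] with ω hω
        simp [Pi.mul_apply, show μ[f2 | m2 e] ω = c2 e from hω]
      rw [h1, h2]
    -- Step 1: ∫ I1 * c1 = ∫ I1 * f1
    have step1 : ∫ ω, I1 e ω * c1 e ∂μ = ∫ ω, I1 e ω * f1 ω ∂μ := by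
      have hg : Measurable fun x : ℝ => max (x - σ1 e) 0 :=
        (measurable_id.sub_const _).max measurable_const
      have hindep : ProbabilityTheory.IndepFun (I1 e) f1 μ := by
        have := (hI1indep e he).comp measurable_id hg
        exact this
      have := ProbabilityTheory.IndepFun.integral_mul_eq_mul_integral hindep (hI1meas e).aestronglyMeasurable
        hf1int.aestronglyMeasurable
      have hmul : ∫ ω, I1 e ω * f1 ω ∂μ = (∫ ω, I1 e ω ∂μ) * ∫ ω, f1 ω ∂μ := this
      have hf1c : ∫ ω, f1 ω ∂μ = c1 e := hσ1 e he
      calc ∫ ω, I1 e ω * c1 e ∂μ = (∫ ω, I1 e ω ∂μ) * c1 e := integral_mul_const _ _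
        _ = (∫ ω, I1 e ω ∂μ) * ∫ ω, f1 ω ∂μ := by rw [hf1c]
        _ = ∫ ω, I1 e ω * f1 ω ∂μ := hmul.symm
    -- pointwise inequality
    have hpt : ∀ ω, A e ω * S ω - I1 e ω * f1 ω - I2 e ω * f2 ω ≤ A e ω * κ e ω := by
      intro ω
      have hch := hchain e ω
      have hf1nn : 0 ≤ f1 ω := le_max_right _ _
      have hf2nn : 0 ≤ f2 ω := le_max_right _ _
      rcases hA01 e ω with hA | hA
      · have hI2nn : 0 ≤ I2 e ω := by rcases hI201 e ω with h | h <;> simp [h]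
        have hI1nn : 0 ≤ I1 e ω := by rcases hI101 e ω with h | h <;> simp [h]
        rw [hA]
        nlinarith
      · have hI2 : I2 e ω = 1 := by
          rcases hI201 e ω with h | h
          · exfalso; have := hch.1; rw [hA, h] at this; linarith
          · exact h
        have hI1 : I1 e ω = 1 := by
          rcases hI101 e ω with h | h
          · exfalso; have := hch.2; rw [hI2, h] at this; linarith
          · exact h
        have hKval : S ω - f2 ω = K ω := by
          rcases le_total (σ2 e ω) (S ω) with h | h <;>
            simp [hKdef, hf2def, min_eq_left, min_eq_right, h, max_eq_left, max_eq_right,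
              sub_nonpos.2 h] <;> linarith
        have hκval : K ω - f1 ω = κ e ω := by
          rw [hκ e ω]
          show min (σ2 e ω) (S ω) - max (min (σ2 e ω) (S ω) - σ1 e) 0 =
            min (σ1 e) (min (σ2 e ω) (S ω))
          rcases le_total (σ1 e) (min (σ2 e ω) (S ω)) with h | h
          · rw [max_eq_left (by linarith), min_eq_left h]; ring
          · rw [max_eq_right (by linarith), min_eq_right h]; ring
        rw [hA, hI1, hI2]
        simp only [one_mul] at *
        linarith
    show ∫ ω, (A e ω * S ω - I1 e ω * c1 e - I2 e ω * c2 e) ∂μ ≤ _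
    calc ∫ ω, (A e ω * S ω - I1 e ω * c1 e - I2 e ω * c2 e) ∂μ
        = ∫ ω, A e ω * S ω ∂μ - ∫ ω, I1 e ω * c1 e ∂μ - ∫ ω, I2 e ω * c2 e ∂μ := by
          have h12 : Integrable (fun ω => A e ω * S ω - I1 e ω * c1 e) μ := hASint.sub hI1c1int
          rw [integral_sub h12 hI2c2int, integral_sub hASint hI1c1int]
      _ = ∫ ω, A e ω * S ω ∂μ - ∫ ω, I1 e ω * f1 ω ∂μ - ∫ ω, I2 e ω * f2 ω ∂μ := by
          rw [step1, step2]
      _ = ∫ ω, (A e ω * S ω - I1 e ω * f1 ω - I2 e ω * f2 ω) ∂μ := by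
          have h12 : Integrable (fun ω => A e ω * S ω - I1 e ω * f1 ω) μ := hASint.sub hI1f1int
          rw [integral_sub h12 hI2f2int, integral_sub hASint hI1f1int]
      _ ≤ ∫ ω, A e ω * κ e ω ∂μ := by
          refine integral_mono ((hASint.sub hI1f1int).sub hI2f2int) hAκint ?_
          intro ω; exact hpt ω
  -- integrability of summands for sum-splitting
  have hsumint1 : ∀ e ∈ O,
      Integrable (fun ω => A e ω * (v1 e ω + v2 e ω) - I1 e ω * c1 e - I2 e ω * c2 e) μ := by
    intro e he
    have hAbd : ∀ ω, ‖A e ω‖ ≤ 1 := by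
      intro ω; rcases hA01 e ω with h | h <;> simp [h]
    have hI1bd : ∀ ω, ‖I1 e ω‖ ≤ 1 := by
      intro ω; rcases hI101 e ω with h | h <;> simp [h]
    have hI2bd : ∀ ω, ‖I2 e ω‖ ≤ 1 := by
      intro ω; rcases hI201 e ω with h | h <;> simp [h]
    have hI2m : Measurable (I2 e) := (hI2meas e he).mono (hm2 e) le_rfl
    exact (((hvint e he).bdd_mul (hAmeas e).aestronglyMeasurable (ae_of_all _ hAbd)).sub
      ((integrable_const (c1 e)).bdd_mul (hI1meas e).aestronglyMeasurable (ae_of_all _ hI1bd))).sub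
      ((integrable_const (c2 e)).bdd_mul hI2m.aestronglyMeasurable (ae_of_all _ hI2bd))
  have hsumint2 : ∀ e ∈ O, Integrable (fun ω => A e ω * κ e ω) μ := by
    intro e he
    have hAbd : ∀ ω, ‖A e ω‖ ≤ 1 := by
      intro ω; rcases hA01 e ω with h | h <;> simp [h]
    exact (hκint e he).bdd_mul (hAmeas e).aestronglyMeasurable (ae_of_all _ hAbd)
  rw [integral_finset_sum O hsumint1, integral_finset_sum O hsumint2]
  exact Finset.sum_le_sum hmono
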